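/- For every integer q ≥ 0 and all pairwise distinct indices i_1,…,i_a, j_1,…,j_b, k_1,…,k_c ∈ {1,…,g} whose weight satisfies a+b+2c+q ≥ n+1, the Macdonald relation x_{i_1}⋯x_{i_a}·x'_{j_1}⋯x'_{j_b}·(y − x_{k_1}x'_{k_1})⋯(y − x_{k_c}x'_{k_c})·y^q belongs to I_Mac. -/

import Mathlib

noncomputable section

open Polynomial

/-- The free graded-commutative ring `E = Λ_ℤ⟨x₁,…,x_g,x'₁,…,x'_g⟩ ⊗ ℤ[y]`,
realized as the exterior algebra over `ℤ[y]` on a free module of rank `2g`. -/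
abbrev E (g : ℕ) : Type :=
  ExteriorAlgebra (Polynomial ℤ) ((Fin g ⊕ Fin g) → Polynomial ℤ)

/-- The degree-one generator `x_i`. -/
def x (g : ℕ) (i : Fin g) : E g :=
  ExteriorAlgebra.ι (Polynomial ℤ) (Pi.single (Sum.inl i) 1)

/-- The degree-one generator `x'_i`. -/
def x' (g : ℕ) (i : Fin g) : E g :=
  ExteriorAlgebra.ι (Polynomial ℤ) (Pi.single (Sum.inr i) 1)

/-- The degree-two polynomial generator `y`. -/
def y (g : ℕ) : E g :=
  algebraMap (Polynomial ℤ) (E g) Polynomial.X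

/-- The Macdonald relation `x_{i₁}⋯x_{i_a}·x'_{j₁}⋯x'_{j_b}·(y−x_{k₁}x'_{k₁})⋯(y−x_{k_c}x'_{k_c})·y^q`
associated to lists of indices `I, J, K` and `q : ℕ`. -/
def macRel (g : ℕ) (I J K : List (Fin g)) (q : ℕ) : E g :=
  (I.map (x g)).prod * (J.map (x' g)).prod *
    (K.map (fun k => y g - x g k * x' g k)).prod * (y g) ^ q

/-- The two-sided ideal `I_Mac` generated by all Macdonald relations of weight `n+1`. -/
def IMac (g n : ℕ) : TwoSidedIdeal (E g) :=
  TwoSidedIdeal.span {z : E g | ∃ (I J K : List (Fin g)) (q : ℕ),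
    (I ++ J ++ K).Nodup ∧ I.length + J.length + 2 * K.length + q = n + 1 ∧
    z = macRel g I J K q}

/-- The monomial `x_A x'_B y^q`. -/
def emonomial (g : ℕ) (A B : Finset (Fin g)) (q : ℕ) : E g :=
  ((A.sort (· ≤ ·)).map (x g)).prod * ((B.sort (· ≤ ·)).map (x' g)).prod * (y g) ^ q

/-- The degree-`s` homogeneous component `E^s`, the ℤ-span of the monomials of degree `s`. -/
def Ecomp (g s : ℕ) : Submodule ℤ (E g) :=
  Submodule.span ℤ {z : E g | ∃ (A B : Finset (Fin g)) (q : ℕ),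
    A.card + B.card + 2 * q = s ∧ z = emonomial g A B q}

/-- Every Macdonald relation of weight at least `n+1` belongs to `I_Mac`. -/
lemma macRel_cons_left (g : ℕ) (i : Fin g) (I J K : List (Fin g)) (q : ℕ) :
    macRel g (i :: I) J K q = x g i * macRel g I J K q := by
  simp [macRel, mul_assoc]

lemma macRel_cons_mid (g : ℕ) (j : Fin g) (J K : List (Fin g)) (q : ℕ) :
    macRel g [] (j :: J) K q = x' g j * macRel g [] J K q := by
  simp [macRel, mul_assoc]

lemma macRel_succ (g : ℕ) (I J K : List (Fin g)) (q : ℕ) :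
    macRel g I J K (q + 1) = macRel g I J K q * y g := by
  simp [macRel, pow_succ, mul_assoc]

lemma y_comm (g : ℕ) (a : E g) : y g * a = a * y g := (Algebra.commutes _ _)

lemma macRel_cons_K (g : ℕ) (k : Fin g) (K : List (Fin g)) :
    macRel g [] [] (k :: K) 0 =
      macRel g [] [] K 1 - x g k * macRel g [] [k] K 0 := by
  simp only [macRel, List.map_cons, List.prod_cons, List.map_nil, List.prod_nil,
    List.map_cons, pow_zero, pow_one, one_mul, mul_one]
  rw [sub_mul, y_comm, mul_assoc]

theorem macRel_mem_IMac_of_weight_ge (g n : ℕ) (hg : 1 ≤ g) (hn : 2 ≤ n)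
    (I J K : List (Fin g)) (q : ℕ) (hnd : (I ++ J ++ K).Nodup)
    (hw : n + 1 ≤ I.length + J.length + 2 * K.length + q) :
    macRel g I J K q ∈ IMac g n := by
  obtain ⟨d, hd⟩ := Nat.exists_eq_add_of_le hw
  clear hw
  induction d generalizing I J K q with
  | zero =>
    exact TwoSidedIdeal.subset_span ⟨I, J, K, q, hnd, by omega, rfl⟩
  | succ d ih =>
    match I, J, q, K with
    | i :: I, J, q, K =>
      rw [macRel_cons_left]
      refine TwoSidedIdeal.mul_mem_left _ _ _ (ih I J K q ?_ ?_)
      · exact (List.Sublist.append (List.Sublist.append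
          (List.sublist_cons_self i I) (List.Sublist.refl J)) (List.Sublist.refl K)).nodup hnd
      · simp only [List.length_cons] at hd; omega
    | [], j :: J, q, K =>
      rw [macRel_cons_mid]
      refine TwoSidedIdeal.mul_mem_left _ _ _ (ih [] J K q ?_ ?_)
      · exact (List.Sublist.append (List.Sublist.append
          (List.Sublist.refl ([] : List (Fin g))) (List.sublist_cons_self j J))
          (List.Sublist.refl K)).nodup hnd
      · simp only [List.length_cons] at hd; omega
    | [], [], q + 1, K =>
      rw [macRel_succ]
      refine TwoSidedIdeal.mul_mem_right _ _ _ (ih [] [] K q hnd ?_)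
      simp only [List.length_nil] at hd ⊢; omega
    | [], [], 0, [] =>
      simp at hd
    | [], [], 0, k :: K =>
      rw [macRel_cons_K]
      simp only [List.nil_append] at hnd
      refine TwoSidedIdeal.sub_mem _ (ih [] [] K 1 ?_ ?_)
        (TwoSidedIdeal.mul_mem_left _ _ _ (ih [] [k] K 0 ?_ ?_))
      · simpa using (List.sublist_cons_self k K).nodup hnd
      · simp only [List.length_nil, List.length_cons] at hd ⊢; omega
      · simpa using hnd
      · simp only [List.length_nil, List.length_cons] at hd ⊢; omega
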